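/- arXiv:1704.03429 — 5 statements merged into one kernel-verified Lean document; each statement's English description precedes it below -/
import Mathlib

section
/- For every positive integer n, the sum over k from 0 to n-1 of 1/(1 + 2·sin²(kπ/n)) equals (n/√3)·(2/(1 - (2-√3)^n) - 1). -/
set_option maxHeartbeats 2000000

open Finset Polynomial

theorem aux_derivative_prod {ι : Type*} [DecidableEq ι] (s : Finset ι) (f : ι → Polynomial ℂ) :
    Polynomial.derivative (∏ i ∈ s, f i)
      = ∑ i ∈ s, (∏ j ∈ s.erase i, f j) * Polynomial.derivative (f i) := by
  induction s using Finset.induction_on with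
  | empty => simp
  | @insert a s ha ih =>
    rw [Finset.prod_insert ha, Polynomial.derivative_mul, ih, Finset.sum_insert ha,
      Finset.erase_insert ha, Finset.mul_sum]
    congr 1
    · exact mul_comm _ _
    refine Finset.sum_congr rfl fun i hi => ?_
    rw [Finset.erase_insert_of_ne (by rintro rfl; exact ha hi),
      Finset.prod_insert (fun h => ha (Finset.mem_of_mem_erase h))]
    ring

theorem stmt_0 (n : ℕ) (hn : 0 < n) :
    ∑ k ∈ Finset.range n, (1 : ℝ) / (1 + 2 * Real.sin (k * Real.pi / n) ^ 2) =
      (n / Real.sqrt 3) * (2 / (1 - (2 - Real.sqrt 3) ^ n) - 1) := by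
  obtain ⟨m, rfl⟩ : ∃ m, n = m + 1 := ⟨n - 1, (Nat.succ_pred_eq_of_pos hn).symm⟩
  have hs3 : Real.sqrt 3 ^ 2 = 3 := Real.sq_sqrt (by norm_num)
  have hs3pos : (0:ℝ) < Real.sqrt 3 := Real.sqrt_pos.2 (by norm_num)
  have hs3lt : Real.sqrt 3 < 2 := by nlinarith
  have hs3gt : (1:ℝ) < Real.sqrt 3 := by nlinarith
  set s3 := Real.sqrt 3 with hs3def
  set p : ℝ := 2 - s3 with hpdef
  have hp0 : 0 < p := by rw [hpdef]; linarith
  have hp1 : p < 1 := by rw [hpdef]; linarith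
  have hpn1 : p ^ (m+1) < 1 := pow_lt_one₀ hp0.le hp1 (Nat.succ_ne_zero m)
  have hpne : p ^ (m+1) - 1 ≠ 0 := by
    have := pow_pos hp0 (m+1); intro h; nlinarith
  set ζ : ℂ := Complex.exp (2 * Real.pi * Complex.I / ((m+1 : ℕ) : ℂ)) with hζdef
  have hζ : IsPrimitiveRoot ζ (m+1) := Complex.isPrimitiveRoot_exp _ (Nat.succ_ne_zero m)
  have himg : Polynomial.nthRootsFinset (m+1) (1 : ℂ)
      = Finset.image (fun k => ζ ^ k) (Finset.range (m+1)) := by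
    ext x
    rw [Polynomial.mem_nthRootsFinset (Nat.succ_pos m) (1 : ℂ), Finset.mem_image]
    constructor
    · intro hx
      obtain ⟨i, hi, hix⟩ := hζ.eq_pow_of_pow_eq_one hx
      exact ⟨i, Finset.mem_range.2 hi, hix⟩
    · rintro ⟨i, -, rfl⟩
      rw [← pow_mul, mul_comm, pow_mul, hζ.pow_eq_one, one_pow]
  have hP : (Polynomial.X ^ (m+1) - 1 : Polynomial ℂ)
      = ∏ k ∈ Finset.range (m+1), (Polynomial.X - Polynomial.C (ζ ^ k)) := by
    rw [Polynomial.X_pow_sub_one_eq_prod (Nat.succ_pos m) hζ, himg,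
      Finset.prod_image (fun i hi j hj h =>
        hζ.pow_inj (Finset.mem_range.1 hi) (Finset.mem_range.1 hj) h)]
  have hprodp : ∏ k ∈ Finset.range (m+1), ((p:ℂ) - ζ ^ k) = (p:ℂ) ^ (m+1) - 1 := by
    have h := congrArg (Polynomial.eval (p:ℂ)) hP
    simpa [Polynomial.eval_prod] using h.symm
  have hpcne : ((p:ℂ) ^ (m+1) - 1) ≠ 0 := by
    intro h
    apply hpne
    have : (((p:ℝ) ^ (m+1) - 1 : ℝ) : ℂ) = 0 := by push_cast; linear_combination h
    exact_mod_cast this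
  have hfacne : ∀ k ∈ Finset.range (m+1), (p:ℂ) - ζ ^ k ≠ 0 := by
    intro k hk h
    exact hpcne (hprodp ▸ Finset.prod_eq_zero hk h)
  have hD : ∑ k ∈ Finset.range (m+1), ∏ j ∈ (Finset.range (m+1)).erase k, ((p:ℂ) - ζ ^ j)
      = (m+1) * (p:ℂ) ^ m := by
    have h1 := congrArg Polynomial.derivative hP
    rw [aux_derivative_prod] at h1
    simp only [Polynomial.derivative_X_sub_C, mul_one] at h1
    have h2 := congrArg (Polynomial.eval (p:ℂ)) h1
    simp [Polynomial.eval_finset_sum, Polynomial.eval_prod] at h2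
    push_cast at h2 ⊢
    linear_combination -h2
  have hksum : ∑ k ∈ Finset.range (m+1), ((p:ℂ) - ζ ^ k)⁻¹
      = (m+1) * (p:ℂ) ^ m / ((p:ℂ) ^ (m+1) - 1) := by
    rw [← hD, Finset.sum_div]
    refine Finset.sum_congr rfl fun k hk => ?_
    rw [eq_div_iff hpcne, ← hprodp, ← Finset.mul_prod_erase _ _ hk,
      inv_mul_cancel_left₀ (hfacne k hk)]
  have hresum : ∑ k ∈ Finset.range (m+1), (((p:ℂ) - ζ ^ k)⁻¹).re
      = (m+1) * p ^ m / (p ^ (m+1) - 1) := by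
    have h := congrArg Complex.re hksum
    rw [Complex.re_sum] at h
    rw [h]
    have h2 : ((m:ℂ)+1) * (p:ℂ) ^ m / ((p:ℂ) ^ (m+1) - 1)
        = ((((m:ℝ)+1) * p ^ m / (p ^ (m+1) - 1) : ℝ) : ℂ) := by push_cast; ring
    rw [h2, Complex.ofReal_re]
  have hterm : ∀ k ∈ Finset.range (m+1),
      (1:ℝ) / (1 + 2 * Real.sin (k * Real.pi / (m+1)) ^ 2)
        = (1 - 2 * p * (((p:ℂ) - ζ ^ k)⁻¹).re) / s3 := by
    intro k hk
    set θ : ℝ := 2 * Real.pi * k / (m+1) with hθ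
    have hzk : ζ ^ k = Complex.exp ((θ:ℂ) * Complex.I) := by
      rw [hζdef, ← Complex.exp_nat_mul]
      congr 1
      push_cast [hθ]
      ring
    have hre : (ζ ^ k).re = Real.cos θ := by
      rw [hzk, Complex.exp_ofReal_mul_I_re]
    have him : (ζ ^ k).im = Real.sin θ := by
      rw [hzk, Complex.exp_ofReal_mul_I_im]
    have hinv : (((p:ℂ) - ζ ^ k)⁻¹).re
        = (p - Real.cos θ) / ((p - Real.cos θ)^2 + Real.sin θ ^ 2) := by
      rw [Complex.inv_re, Complex.normSq_apply]
      simp [Complex.sub_re, Complex.sub_im, hre, him]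
      ring_nf
    have hcos : Real.cos θ = 1 - 2 * Real.sin (k * Real.pi / (m+1)) ^ 2 := by
      have hθ2 : θ = 2 * (k * Real.pi / (m+1)) := by rw [hθ]; ring
      rw [hθ2, Real.cos_two_mul, Real.cos_sq']
      ring
    have hs2 : Real.sin θ ^ 2 = 1 - Real.cos θ ^ 2 := Real.sin_sq θ
    have hdenom : (p - Real.cos θ)^2 + Real.sin θ ^ 2 = 2 * p * (2 - Real.cos θ) := by
      rw [hs2, hpdef]; nlinarith
    have hcle : Real.cos θ ≤ 1 := Real.cos_le_one θ
    have hdpos : (0:ℝ) < 2 - Real.cos θ := by linarith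
    have h2p : 2 - p = s3 := by rw [hpdef]; ring
    have hd0' : (0:ℝ) < 1 + 2 * Real.sin (k * Real.pi / (m+1)) ^ 2 := by positivity
    rw [hinv, hdenom, hcos]
    set S : ℝ := Real.sin (k * Real.pi / (m+1)) ^ 2 with hS
    have e1 : (2:ℝ) - (1 - 2*S) = 1 + 2*S := by ring
    rw [e1]
    have hd : (1:ℝ) + 2*S ≠ 0 := ne_of_gt hd0'
    have hs3ne : s3 ≠ 0 := ne_of_gt hs3pos
    have h2s3 : (2:ℝ) - s3 ≠ 0 := by linarith
    rw [hpdef]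
    field_simp
    ring
  push_cast
  rw [Finset.sum_congr rfl hterm]
  rw [show ∀ f : ℕ → ℝ, ∑ k ∈ Finset.range (m+1), (1 - 2*p*f k)/s3
      = ((m+1 : ℝ) - 2*p*∑ k ∈ Finset.range (m+1), f k)/s3 from ?_, hresum]
  · push_cast
    have h1 : (1:ℝ) - p ^ (m+1) ≠ 0 := fun h => hpne (by linarith [sub_eq_zero.1 h])
    field_simp
    ring
  · intro f
    rw [← Finset.sum_div, Finset.sum_sub_distrib, Finset.sum_const, ← Finset.mul_sum,
      Finset.card_range]
    push_cast
    ring_nf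
end

section
/- For every positive integer n, ∑_{k=1}^{n-1} 1/sin²(kπ/n) = (n²-1)/3. -/
open Complex Finset

private lemma csc_sumid (n : ℕ) : ∑ j ∈ range n, (j:ℂ) = n*(n-1)/2 := by
  induction n with
  | zero => simp
  | succ m ih => rw [Finset.sum_range_succ, ih]; push_cast; ring

private lemma csc_sumsq (n : ℕ) : ∑ j ∈ range n, (j:ℂ)^2 = n*(n-1)*(2*n-1)/6 := by
  induction n with
  | zero => simp
  | succ m ih => rw [Finset.sum_range_succ, ih]; push_cast; ring

private lemma csc_Ak (n : ℕ) (z : ℂ) (hz1 : z ≠ 1) (hzn : z ^ n = 1) :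
    ∑ j ∈ range n, (j:ℂ) * z^j = n / (z - 1) := by
  have hz : z - 1 ≠ 0 := sub_ne_zero.mpr hz1
  rw [eq_div_iff hz]
  have geo : ∑ j ∈ range n, z^j = 0 := by
    rw [geom_sum_eq hz1, hzn]; simp
  have tel : ∑ j ∈ range n, (((j:ℂ)+1) * z^(j+1) - (j:ℂ) * z^j) = n * z^n := by
    have := Finset.sum_range_sub (fun j => (j:ℂ) * z^j) n
    simpa using this
  have expand : (∑ j ∈ range n, (j:ℂ) * z^j) * (z - 1)
      = (∑ j ∈ range n, (((j:ℂ)+1) * z^(j+1) - (j:ℂ) * z^j)) - z * ∑ j ∈ range n, z^j := by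
    rw [Finset.sum_mul, Finset.mul_sum, ← Finset.sum_sub_distrib]
    exact Finset.sum_congr rfl fun j _ => by ring
  rw [expand, tel, geo, hzn]; ring

private lemma csc_sinterm (n : ℕ) (hn : 0 < n) (k : ℕ) (hk1 : 1 ≤ k) (hk2 : k ≤ n - 1) :
    ((1 : ℝ) / Real.sin (k * Real.pi / n) ^ 2 : ℝ) =
      -4 * Complex.exp (2 * Real.pi * I / n) ^ k /
        (Complex.exp (2 * Real.pi * I / n) ^ k - 1) ^ 2 := by
  have prim := Complex.isPrimitiveRoot_exp n hn.ne'
  have hkn : k < n := by omega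
  set w : ℂ := Complex.exp ((k : ℂ) * Real.pi * I / n) with hw
  have hw0 : w ≠ 0 := Complex.exp_ne_zero _
  have hw2 : Complex.exp (2 * Real.pi * I / n) ^ k = w ^ 2 := by
    rw [hw, ← Complex.exp_nat_mul, ← Complex.exp_nat_mul]
    congr 1
    push_cast
    ring
  have hz1 : w ^ 2 ≠ 1 := by
    rw [← hw2]
    exact prim.pow_ne_one_of_pos_of_lt (by omega) hkn
  have hzm1 : w ^ 2 - 1 ≠ 0 := sub_ne_zero.mpr hz1
  have hsin : Complex.sin ((k : ℂ) * Real.pi / n) = (w⁻¹ - w) * I / 2 := by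
    have h2 := Complex.two_sin ((k : ℂ) * Real.pi / n)
    have harg : (k : ℂ) * Real.pi / n * I = (k : ℂ) * Real.pi * I / n := by ring
    rw [harg] at h2
    have hneg : Complex.exp (-((k : ℂ) * Real.pi * I / n)) = w⁻¹ := by
      rw [hw, ← Complex.exp_neg]
    rw [neg_mul, harg, hneg, ← hw] at h2
    linear_combination h2 / 2
  push_cast
  rw [hw2]
  have hs2 : Complex.sin ((k:ℂ) * Real.pi / n) ^ 2 = -((w^2-1)^2) / (4 * w^2) := by
    rw [hsin, div_pow, mul_pow, Complex.I_sq]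
    field_simp
    ring
  rw [hs2]
  field_simp

private lemma csc_orth (n : ℕ) (hn : 0 < n) (m : ℕ) :
    ∑ k ∈ range n, (Complex.exp (2 * Real.pi * I / n) ^ m) ^ k
      = if n ∣ m then (n : ℂ) else 0 := by
  have prim := Complex.isPrimitiveRoot_exp n hn.ne'
  by_cases h : n ∣ m
  · rw [if_pos h, (prim.pow_eq_one_iff_dvd m).mpr h]
    simp
  · rw [if_neg h]
    have h1 : Complex.exp (2 * Real.pi * I / n) ^ m ≠ 1 := by
      intro he; exact h ((prim.pow_eq_one_iff_dvd m).mp he)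
    rw [geom_sum_eq h1, ← pow_mul, mul_comm m n, pow_mul, prim.pow_eq_one]
    simp

theorem stmt_1 (n : ℕ) (hn : 0 < n) :
    ∑ k ∈ Finset.Icc 1 (n - 1), (1 : ℝ) / Real.sin (k * Real.pi / n) ^ 2 =
      ((n : ℝ) ^ 2 - 1) / 3 := by
  have prim := Complex.isPrimitiveRoot_exp n hn.ne'
  set ζ : ℂ := Complex.exp (2 * Real.pi * I / n) with hζ
  have hnC : (n : ℂ) ≠ 0 := Nat.cast_ne_zero.mpr hn.ne'
  -- complex version
  have hC : ∑ k ∈ Finset.Icc 1 (n - 1), (((1 : ℝ) / Real.sin (k * Real.pi / n) ^ 2 : ℝ) : ℂ)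
      = ((n : ℂ) ^ 2 - 1) / 3 := by
    -- step 1: rewrite each term
    have step1 : ∑ k ∈ Finset.Icc 1 (n - 1), (((1 : ℝ) / Real.sin (k * Real.pi / n) ^ 2 : ℝ) : ℂ)
        = ∑ k ∈ Finset.Icc 1 (n - 1), (-4 / (n:ℂ)^2) * (ζ^k * (∑ j ∈ range n, (j:ℂ) * (ζ^k)^j)^2) := by
      apply Finset.sum_congr rfl
      intro k hk
      rw [Finset.mem_Icc] at hk
      have hkn : k < n := by omega
      have hz1 : ζ^k ≠ 1 := prim.pow_ne_one_of_pos_of_lt (by omega) hkn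
      have hzm : ζ^k - 1 ≠ 0 := sub_ne_zero.mpr hz1
      have hznn : (ζ^k)^n = 1 := by
        rw [← pow_mul, mul_comm k n, pow_mul, prim.pow_eq_one]; simp
      rw [csc_sinterm n hn k hk.1 hk.2, ← hζ, csc_Ak n (ζ^k) hz1 hznn]
      field_simp
    rw [step1, ← Finset.mul_sum]
    -- convert index set
    have hIcc : Finset.Icc 1 (n-1) = (Finset.range n).erase 0 := by
      ext x
      simp only [Finset.mem_Icc, Finset.mem_erase, Finset.mem_range]
      omega
    have h0mem : (0:ℕ) ∈ Finset.range n := Finset.mem_range.mpr hn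
    rw [hIcc, Finset.sum_erase_eq_sub h0mem]
    -- the k = 0 term
    have hF0 : ζ^(0:ℕ) * (∑ j ∈ range n, (j:ℂ) * (ζ^(0:ℕ))^j)^2 = ((n:ℂ)*(n-1)/2)^2 := by
      simp [csc_sumid]
    -- the big sum over all k
    have hFk : ∀ k : ℕ, ζ^k * (∑ j ∈ range n, (j:ℂ) * (ζ^k)^j)^2
        = ∑ j ∈ range n, ∑ l ∈ range n, ((j:ℂ) * l) * (ζ^(j+l+1))^k := by
      intro k
      rw [sq, Finset.sum_mul_sum, Finset.mul_sum]
      apply Finset.sum_congr rfl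
      intro j _
      rw [Finset.mul_sum]
      apply Finset.sum_congr rfl
      intro l _
      have hz : ζ ^ k * ((ζ^k)^j * (ζ^k)^l) = (ζ^(j+l+1))^k := by
        rw [← pow_mul, ← pow_mul, ← pow_mul, ← pow_add, ← pow_add]
        congr 1
        ring
      calc ζ^k * ((j:ℂ) * (ζ^k)^j * ((l:ℂ) * (ζ^k)^l))
          = ((j:ℂ)*l) * (ζ^k * ((ζ^k)^j * (ζ^k)^l)) := by ring
        _ = ((j:ℂ)*l) * (ζ^(j+l+1))^k := by rw [hz]
    have hbig : ∑ k ∈ range n, ζ^k * (∑ j ∈ range n, (j:ℂ) * (ζ^k)^j)^2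
        = (n:ℂ) * (((n:ℂ)-1) * ((n:ℂ)*((n:ℂ)-1)/2) - (n:ℂ)*((n:ℂ)-1)*(2*(n:ℂ)-1)/6) := by
      have e1 : ∑ k ∈ range n, ζ^k * (∑ j ∈ range n, (j:ℂ) * (ζ^k)^j)^2
          = ∑ j ∈ range n, ∑ l ∈ range n, ((j:ℂ) * l) * (if n ∣ (j+l+1) then (n:ℂ) else 0) := by
        calc ∑ k ∈ range n, ζ^k * (∑ j ∈ range n, (j:ℂ) * (ζ^k)^j)^2
            = ∑ k ∈ range n, ∑ j ∈ range n, ∑ l ∈ range n, ((j:ℂ) * l) * (ζ^(j+l+1))^k := by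
              exact Finset.sum_congr rfl fun k _ => hFk k
          _ = ∑ j ∈ range n, ∑ k ∈ range n, ∑ l ∈ range n, ((j:ℂ) * l) * (ζ^(j+l+1))^k :=
              Finset.sum_comm
          _ = ∑ j ∈ range n, ∑ l ∈ range n, ∑ k ∈ range n, ((j:ℂ) * l) * (ζ^(j+l+1))^k := by
              exact Finset.sum_congr rfl fun j _ => Finset.sum_comm
          _ = ∑ j ∈ range n, ∑ l ∈ range n, ((j:ℂ) * l) * (if n ∣ (j+l+1) then (n:ℂ) else 0) := by
              apply Finset.sum_congr rfl; intro j _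
              apply Finset.sum_congr rfl; intro l _
              rw [← Finset.mul_sum, csc_orth n hn (j+l+1)]
      rw [e1]
      have e2 : ∀ j ∈ range n, ∑ l ∈ range n, ((j:ℂ) * l) * (if n ∣ (j+l+1) then (n:ℂ) else 0)
          = (j:ℂ) * ((n:ℂ) - 1 - j) * n := by
        intro j hj
        rw [Finset.mem_range] at hj
        have e3 : ∀ l ∈ range n, ((j:ℂ) * l) * (if n ∣ (j+l+1) then (n:ℂ) else 0)
            = if l = n - 1 - j then ((j:ℂ) * l) * n else 0 := by
          intro l hl
          rw [Finset.mem_range] at hl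
          have hd : (n ∣ (j+l+1)) ↔ l = n - 1 - j := by
            constructor
            · rintro ⟨c, hc⟩
              rcases c with _ | _ | c
              · omega
              · omega
              · have : n * 2 ≤ n * (c+1+1) := Nat.mul_le_mul_left n (by omega)
                omega
            · intro h
              exact ⟨1, by omega⟩
          by_cases hcase : l = n - 1 - j
          · rw [if_pos hcase, if_pos (hd.mpr hcase)]
          · rw [if_neg hcase, if_neg (fun hdd => hcase (hd.mp hdd)), mul_zero]
        rw [Finset.sum_congr rfl e3, Finset.sum_ite_eq' (range n) (n-1-j)
          (fun l => ((j:ℂ) * l) * n), if_pos (Finset.mem_range.mpr (by omega))]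
        have hcast : ((n - 1 - j : ℕ) : ℂ) = (n:ℂ) - 1 - j := by
          have h1 : n - 1 - j = n - (1 + j) := by omega
          rw [h1, Nat.cast_sub (by omega)]
          push_cast
          ring
        rw [hcast]
      rw [Finset.sum_congr rfl e2]
      calc ∑ j ∈ range n, (j:ℂ) * ((n:ℂ) - 1 - j) * n
          = ∑ j ∈ range n, ((n:ℂ) * (((n:ℂ)-1) * j) - (n:ℂ) * (j:ℂ)^2) := by
            exact Finset.sum_congr rfl fun j _ => by ring
        _ = (n:ℂ) * (((n:ℂ)-1) * (∑ j ∈ range n, (j:ℂ))) - (n:ℂ) * (∑ j ∈ range n, (j:ℂ)^2) := by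
            rw [Finset.sum_sub_distrib, ← Finset.mul_sum, ← Finset.mul_sum, ← Finset.mul_sum]
        _ = (n:ℂ) * (((n:ℂ)-1) * ((n:ℂ)*((n:ℂ)-1)/2) - (n:ℂ)*((n:ℂ)-1)*(2*(n:ℂ)-1)/6) := by
            rw [csc_sumid, csc_sumsq]
            ring
    rw [hbig, hF0]
    field_simp
    ring
  -- deduce the real statement
  have : ((∑ k ∈ Finset.Icc 1 (n - 1), (1 : ℝ) / Real.sin (k * Real.pi / n) ^ 2 : ℝ) : ℂ)
      = ((((n : ℝ) ^ 2 - 1) / 3 : ℝ) : ℂ) := by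
    push_cast
    rw [← hC]
    push_cast
    rfl
  exact_mod_cast this
end

section
/- Define G : ℕ → ℤ by G₀ = 0, G₁ = 1, G_{n+2} = 4·G_{n+1} − G_n. Then for every positive integer n, (n/√3)·(2/(1 − (2-√3)^n) − 1) = 2n·G_n²/(G_{2n} − 2·G_n) as real numbers. -/
def G : ℕ → ℤ
  | 0 => 0
  | 1 => 1
  | n + 2 => 4 * G (n + 1) - G n

lemma Gclosed : ∀ n : ℕ, (G n : ℝ) * (2 * Real.sqrt 3) =
    (2 + Real.sqrt 3) ^ n - (2 - Real.sqrt 3) ^ n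
  | 0 => by simp [G]
  | 1 => by simp [G]; ring
  | n + 2 => by
    have h1 := Gclosed (n + 1)
    have h2 := Gclosed n
    have hs : Real.sqrt 3 ^ 2 = 3 := Real.sq_sqrt (by norm_num)
    show ((4 * G (n+1) - G n : ℤ) : ℝ) * (2 * Real.sqrt 3) = _
    push_cast
    linear_combination 4 * h1 - h2 + ((2 - Real.sqrt 3) ^ n - (2 + Real.sqrt 3) ^ n) * hs

theorem stmt_4 (n : ℕ) (hn : 0 < n) :
    ((n : ℝ) / Real.sqrt 3) * (2 / (1 - (2 - Real.sqrt 3) ^ n) - 1) =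
      2 * n * (G n : ℝ) ^ 2 / ((G (2 * n) : ℝ) - 2 * (G n : ℝ)) := by
  set s := Real.sqrt 3 with hsdef
  have hs2 : s ^ 2 = 3 := Real.sq_sqrt (by norm_num)
  have hspos : 0 < s := Real.sqrt_pos.mpr (by norm_num)
  have hs1 : 1 < s := by nlinarith
  set a := (2 + s) ^ n with ha
  set b := (2 - s) ^ n with hb
  have hab : a * b = 1 := by
    rw [ha, hb, ← mul_pow]
    have : (2 + s) * (2 - s) = 1 := by nlinarith
    rw [this, one_pow]
  have hbpos : 0 < b := pow_pos (by nlinarith) n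
  have hblt : b < 1 := by
    calc b ≤ (2 - s) ^ 1 := pow_le_pow_of_le_one (by nlinarith) (by nlinarith) hn
    _ < 1 := by nlinarith
  have hagt : 2 < a := by
    calc (2:ℝ) < (2 + s) ^ 1 := by nlinarith
    _ ≤ a := pow_le_pow_right₀ (by nlinarith) hn
  have hg := Gclosed n
  have hg2 := Gclosed (2 * n)
  rw [← hsdef, ← ha, ← hb] at hg
  rw [← hsdef] at hg2
  rw [show (2 + s) ^ (2 * n) = a ^ 2 by rw [ha, ← pow_mul, Nat.mul_comm],
      show (2 - s) ^ (2 * n) = b ^ 2 by rw [hb, ← pow_mul, Nat.mul_comm]] at hg2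
  set g := (G n : ℝ)
  set h := (G (2 * n) : ℝ)
  have hden : h - 2 * g > 0 := by
    have : (h - 2 * g) * (2 * s) = (a - b) * (a + b - 2) := by nlinarith [hg, hg2]
    nlinarith [this]
  have hb1 : 1 - b ≠ 0 := by nlinarith
  field_simp
  refine mul_right_cancel₀ (show (2 * s) ≠ 0 by positivity) ?_
  linear_combination (1 + b) * hg2 - 2 * (1 + b) * hg
    - (1 - b) * (2 * g * s + a - b) * hg + 2 * (a - b) * hab
end

section
/- For every positive integer n, the sum over k from 0 to n-1 of 1/(1 + 2·sin²(kπ/n)) equals 2n·G_n²/(G_{2n} − 2·G_n), where G is defined by G₀ = 0, G₁ = 1, G_{n+2} = 4G_{n+1} − G_n. -/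
open Complex in
lemma sum_inv_sub_root (n : ℕ) (hn : 0 < n) (x : ℂ) (hx : x ^ n ≠ 1) :
    ∑ k ∈ Finset.range n, (1:ℂ) / (x - Complex.exp (2 * Real.pi * I / n) ^ k)
      = n * x ^ (n-1) / (x ^ n - 1) := by
  set ζ : ℂ := Complex.exp (2 * Real.pi * I / n) with hζ
  have hprim : IsPrimitiveRoot ζ n := Complex.isPrimitiveRoot_exp n hn.ne'
  have hζn : ζ ^ n = 1 := hprim.pow_eq_one
  have hden : x ^ n - 1 ≠ 0 := sub_ne_zero.mpr hx
  have hterm : ∀ k ∈ Finset.range n,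
      (1:ℂ) / (x - ζ ^ k) = (∑ m ∈ Finset.range n, x ^ m * (ζ ^ k) ^ (n-1-m)) / (x ^ n - 1) := by
    intro k _
    have hxk : x - ζ ^ k ≠ 0 := by
      intro h
      apply hx
      have : x = ζ ^ k := by linear_combination h
      rw [this, ← pow_mul, mul_comm, pow_mul, hζn, one_pow]
    rw [div_eq_div_iff hxk hden, one_mul]
    have := geom_sum₂_mul x (ζ ^ k) n
    rw [← pow_mul, mul_comm k n, pow_mul, hζn, one_pow] at this
    linear_combination -this
  rw [Finset.sum_congr rfl hterm, ← Finset.sum_div]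
  congr 1
  have : ∀ k ∈ Finset.range n, ∑ m ∈ Finset.range n, x ^ m * (ζ ^ k) ^ (n-1-m)
      = ∑ m ∈ Finset.range n, x ^ m * (ζ ^ (n-1-m)) ^ k := by
    intro k _
    refine Finset.sum_congr rfl fun m _ => ?_
    rw [← pow_mul, ← pow_mul, Nat.mul_comm]
  rw [Finset.sum_congr rfl this, Finset.sum_comm]
  have hinner : ∀ m ∈ Finset.range n,
      ∑ k ∈ Finset.range n, x ^ m * (ζ ^ (n-1-m)) ^ k
        = if m = n - 1 then (n:ℂ) * x ^ (n-1) else 0 := by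
    intro m hm
    rw [← Finset.mul_sum]
    rcases eq_or_ne m (n-1) with h | h
    · subst h
      simp [Nat.sub_self]
      ring
    · have hlt : m < n := Finset.mem_range.mp hm
      have h1 : 0 < n - 1 - m := by omega
      have h2 : n - 1 - m < n := by omega
      have hne1 : ζ ^ (n-1-m) ≠ 1 := hprim.pow_ne_one_of_pos_of_lt h1.ne' h2
      have hz1 : (ζ ^ (n-1-m)) ^ n = 1 := by
        rw [← pow_mul, Nat.mul_comm, pow_mul, hζn, one_pow]
      rw [geom_sum_eq hne1, hz1, sub_self, zero_div, mul_zero]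
      simp [h]
  rw [Finset.sum_congr rfl hinner, Finset.sum_ite_eq' (Finset.range n) (n-1)]
  simp [Finset.mem_range.mpr (by omega : n - 1 < n)]

open Complex in
lemma term_eq (θ : ℝ) :
    (((Real.sqrt 3) / (2 - Real.cos θ) : ℝ) : ℂ)
      = ((2 + Real.sqrt 3 : ℝ) : ℂ) / (((2 + Real.sqrt 3 : ℝ) : ℂ) - Complex.exp (θ * I))
        - ((2 - Real.sqrt 3 : ℝ) : ℂ) / (((2 - Real.sqrt 3 : ℝ) : ℂ) - Complex.exp (θ * I)) := by
  have hs3 : Real.sqrt 3 ^ 2 = 3 := Real.sq_sqrt (by norm_num)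
  have hs3C : ((Real.sqrt 3 : ℝ) : ℂ) ^ 2 = 3 := by exact_mod_cast congrArg (Complex.ofReal) hs3
  have hs0 : (0:ℝ) < Real.sqrt 3 := Real.sqrt_pos.mpr (by norm_num)
  have hs2 : Real.sqrt 3 < 2 := by nlinarith
  set t : ℂ := Complex.exp (θ * I) with ht
  have habs : ‖t‖ = 1 := Complex.norm_exp_ofReal_mul_I θ
  have ht0 : t ≠ 0 := by
    intro h; rw [h] at habs; simp at habs
  have hzt : ((2 + Real.sqrt 3 : ℝ) : ℂ) - t ≠ 0 := by
    intro h
    have : ((2 + Real.sqrt 3 : ℝ) : ℂ) = t := by linear_combination h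
    have h2 := congrArg (‖·‖) this
    rw [habs, Complex.norm_real, Real.norm_eq_abs] at h2
    rw [abs_of_pos (by positivity)] at h2
    nlinarith
  have hwt : ((2 - Real.sqrt 3 : ℝ) : ℂ) - t ≠ 0 := by
    intro h
    have : ((2 - Real.sqrt 3 : ℝ) : ℂ) = t := by linear_combination h
    have h2 := congrArg (‖·‖) this
    rw [habs, Complex.norm_real, Real.norm_eq_abs] at h2
    rw [abs_of_pos (by linarith)] at h2
    nlinarith
  have hcos : (2:ℝ) - Real.cos θ ≠ 0 := by
    have := Real.cos_le_one θ; intro h; linarith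
  have hcosC : (2:ℂ) - Complex.cos (θ:ℂ) ≠ 0 := by
    have h := Complex.ofReal_ne_zero.mpr hcos
    push_cast at h
    exact h
  have hkey : t ^ 2 + 1 = 2 * t * Complex.cos (θ:ℂ) := by
    have h2 : Complex.exp (-((θ:ℂ) * I)) = t⁻¹ := by rw [ht, ← Complex.exp_neg]
    have h1 : Complex.cos (θ:ℂ) = (Complex.exp ((θ:ℂ) * I) + Complex.exp (-((θ:ℂ) * I))) / 2 := by
      rw [Complex.cos]
      ring_nf
    rw [h1, ← ht, h2]
    field_simp
  push_cast
  rw [div_sub_div _ _ (by push_cast at hzt ⊢; exact hzt) (by push_cast at hwt ⊢; exact hwt),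
    div_eq_div_iff hcosC (mul_ne_zero (by push_cast at hzt ⊢; exact hzt) (by push_cast at hwt ⊢; exact hwt))]
  linear_combination ((Real.sqrt 3 : ℝ) : ℂ) * hkey - ((Real.sqrt 3 : ℝ) : ℂ) * hs3C

lemma binet (m : ℕ) :
    (G m : ℝ) * (2 * Real.sqrt 3) = (2 + Real.sqrt 3) ^ m - (2 - Real.sqrt 3) ^ m := by
  have hs3 : Real.sqrt 3 ^ 2 = 3 := Real.sq_sqrt (by norm_num)
  have key : ∀ m : ℕ, (G m : ℝ) * (2 * Real.sqrt 3) = (2 + Real.sqrt 3) ^ m - (2 - Real.sqrt 3) ^ m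
      ∧ (G (m+1) : ℝ) * (2 * Real.sqrt 3) = (2 + Real.sqrt 3) ^ (m+1) - (2 - Real.sqrt 3) ^ (m+1) := by
    intro m
    induction m with
    | zero =>
      constructor
      · simp [G]
      · show ((G 1 : ℤ) : ℝ) * _ = _
        rw [show G 1 = 1 from rfl]
        push_cast
        ring
    | succ k ih =>
      refine ⟨ih.2, ?_⟩
      rw [show G (k+2) = 4 * G (k+1) - G k from rfl]
      push_cast
      have hz : (2 + Real.sqrt 3) ^ (k+2) = 4 * (2 + Real.sqrt 3) ^ (k+1) - (2 + Real.sqrt 3) ^ k := by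
        have h2 : (2 + Real.sqrt 3) ^ 2 = 4 * (2 + Real.sqrt 3) - 1 := by nlinarith
        linear_combination (2 + Real.sqrt 3) ^ k * h2
      have hw : (2 - Real.sqrt 3) ^ (k+2) = 4 * (2 - Real.sqrt 3) ^ (k+1) - (2 - Real.sqrt 3) ^ k := by
        have h2 : (2 - Real.sqrt 3) ^ 2 = 4 * (2 - Real.sqrt 3) - 1 := by nlinarith
        linear_combination (2 - Real.sqrt 3) ^ k * h2
      linear_combination 4 * ih.2 - ih.1 + hz - hw + (2 * ((2 - Real.sqrt 3) ^ k - (2 + Real.sqrt 3) ^ k)) * hs3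
  exact (key m).1

open Complex Finset Real in
theorem stmt_5 (n : ℕ) (hn : 0 < n) :
    ∑ k ∈ Finset.range n, (1 : ℝ) / (1 + 2 * Real.sin (k * Real.pi / n) ^ 2) =
      2 * n * (G n : ℝ) ^ 2 / ((G (2 * n) : ℝ) - 2 * (G n : ℝ)) := by
  have hs3 : Real.sqrt 3 ^ 2 = 3 := Real.sq_sqrt (by norm_num)
  have hs0 : (0:ℝ) < Real.sqrt 3 := Real.sqrt_pos.mpr (by norm_num)
  have hs2 : Real.sqrt 3 < 2 := by nlinarith
  have hs1 : 1 < Real.sqrt 3 := by nlinarith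
  set s := Real.sqrt 3 with hsdef
  set a : ℝ := (2 + s) ^ n with hadef
  set b : ℝ := (2 - s) ^ n with hbdef
  have ha1 : 1 < a := one_lt_pow₀ (by linarith) hn.ne'
  have hb0 : 0 < b := pow_pos (by linarith) n
  have hb1 : b < 1 := pow_lt_one₀ (by linarith) (by linarith) hn.ne'
  have hab : a * b = 1 := by
    rw [hadef, hbdef, ← mul_pow, show (2+s)*(2-s) = 4 - s^2 by ring, hs3]
    norm_num
  -- complex side
  set ζ : ℂ := Complex.exp (2 * Real.pi * I / n) with hζ
  have hθ : ∀ k : ℕ, ζ ^ k = Complex.exp ((2 * Real.pi * k / n : ℝ) * I) := by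
    intro k
    rw [hζ, ← Complex.exp_nat_mul]
    congr 1
    push_cast
    ring
  have hterm : ∀ k ∈ Finset.range n,
      ((1 / (1 + 2 * Real.sin (k * Real.pi / n) ^ 2) : ℝ) : ℂ)
        = ((s⁻¹ : ℝ) : ℂ) * (((2 + s : ℝ) : ℂ) / (((2 + s : ℝ) : ℂ) - ζ ^ k)
            - ((2 - s : ℝ) : ℂ) / (((2 - s : ℝ) : ℂ) - ζ ^ k)) := by
    intro k _
    rw [hθ k, ← term_eq (2 * Real.pi * k / n)]
    rw [← Complex.ofReal_mul]
    congr 1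
    have hc : Real.cos (2 * Real.pi * k / n) = 1 - 2 * Real.sin (k * Real.pi / n) ^ 2 := by
      rw [show (2 * Real.pi * k / n) = 2 * (k * Real.pi / n) by ring, Real.cos_two_mul]
      nlinarith [Real.sin_sq_add_cos_sq (k * Real.pi / n)]
    rw [hc]
    have hpos : (0:ℝ) < 1 + 2 * Real.sin (k * Real.pi / n) ^ 2 := by positivity
    rw [show (2 : ℝ) - (1 - 2 * Real.sin (k * Real.pi / n) ^ 2) = 1 + 2 * Real.sin (k * Real.pi / n) ^ 2 by ring]
    field_simp
    exact hsdef
  have haC : ((2 + s : ℝ) : ℂ) ^ n ≠ 1 := by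
    intro h
    rw [← Complex.ofReal_pow, ← Complex.ofReal_one, Complex.ofReal_inj] at h
    rw [← hadef] at h
    linarith [h ▸ ha1]
  have hbC : ((2 - s : ℝ) : ℂ) ^ n ≠ 1 := by
    intro h
    rw [← Complex.ofReal_pow, ← Complex.ofReal_one, Complex.ofReal_inj] at h
    rw [← hbdef] at h
    linarith [h ▸ hb1]
  have hsum : ((∑ k ∈ Finset.range n, (1 : ℝ) / (1 + 2 * Real.sin (k * Real.pi / n) ^ 2) : ℝ) : ℂ)
      = ((s⁻¹ * ((2+s) * (n * (2+s)^(n-1) / (a - 1)) - (2-s) * (n * (2-s)^(n-1) / (b - 1))) : ℝ) : ℂ) := by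
    rw [Complex.ofReal_sum]
    rw [Finset.sum_congr rfl hterm, ← Finset.mul_sum]
    have hsub : ∑ k ∈ Finset.range n, (((2 + s : ℝ) : ℂ) / (((2 + s : ℝ) : ℂ) - ζ ^ k)
            - ((2 - s : ℝ) : ℂ) / (((2 - s : ℝ) : ℂ) - ζ ^ k))
        = ((2+s:ℝ):ℂ) * ∑ k ∈ Finset.range n, (1:ℂ) / (((2 + s : ℝ) : ℂ) - ζ ^ k)
          - ((2-s:ℝ):ℂ) * ∑ k ∈ Finset.range n, (1:ℂ) / (((2 - s : ℝ) : ℂ) - ζ ^ k) := by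
      rw [Finset.mul_sum, Finset.mul_sum, ← Finset.sum_sub_distrib]
      refine Finset.sum_congr rfl fun k _ => ?_
      ring
    rw [hsub, hζ, sum_inv_sub_root n hn _ haC, sum_inv_sub_root n hn _ hbC]
    push_cast
    rw [hadef, hbdef]
    push_cast
    ring
  have hreal : (s⁻¹ * ((2+s) * (n * (2+s)^(n-1) / (a - 1)) - (2-s) * (n * (2-s)^(n-1) / (b - 1))) : ℝ)
      = 2 * n * (G n : ℝ) ^ 2 / ((G (2 * n) : ℝ) - 2 * (G n : ℝ)) := by
    have hpa : (2+s) * (2+s)^(n-1) = a := by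
      rw [hadef, ← pow_succ']
      congr 1
      omega
    have hpb : (2-s) * (2-s)^(n-1) = b := by
      rw [hbdef, ← pow_succ']
      congr 1
      omega
    have hg : (G n : ℝ) * (2 * s) = a - b := binet n
    have e1 : (2+s)^(2*n) = a^2 := by rw [hadef, ← pow_mul, Nat.mul_comm]
    have e2 : (2-s)^(2*n) = b^2 := by rw [hbdef, ← pow_mul, Nat.mul_comm]
    have hG2 : (G (2*n) : ℝ) * (2 * s) = a^2 - b^2 := by
      have h := binet (2*n)
      rw [← hsdef, e1, e2] at h
      exact h
    have hgexp : (G n : ℝ) = (a - b) / (2 * s) := by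
      field_simp
      linarith [hg]
    have hG2exp : (G (2*n) : ℝ) = (a^2 - b^2) / (2 * s) := by
      field_simp
      linarith [hG2]
    have habm2 : 0 < a + b - 2 := by nlinarith
    have hamb : 0 < a - b := by linarith
    have ha1' : a - 1 ≠ 0 := by linarith
    have hb1' : b - 1 ≠ 0 := by linarith
    have hs' : s ≠ 0 := by linarith
    have hmid : (n:ℝ) * a / (a-1) - n * b / (b-1) = n * (a - b) / (a + b - 2) := by
      rw [div_sub_div _ _ ha1' hb1', div_eq_div_iff (mul_ne_zero ha1' hb1') (by linarith)]
      linear_combination ((n:ℝ) * (b - a)) * hab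
    have hD : (a^2 - b^2) / (2*s) - 2 * ((a - b) / (2*s)) = (a - b) * (a + b - 2) / (2*s) := by
      field_simp
      ring
    have hR : 2 * (n:ℝ) * ((a - b) / (2*s))^2 / ((a - b) * (a + b - 2) / (2*s))
        = n * (a - b) / (s * (a + b - 2)) := by
      field_simp
    have hL : s⁻¹ * ((2+s) * ((n:ℝ) * (2+s)^(n-1) / (a - 1)) - (2-s) * ((n:ℝ) * (2-s)^(n-1) / (b - 1)))
        = s⁻¹ * ((n:ℝ) * a / (a-1) - n * b / (b-1)) := by
      rw [← hpa, ← hpb]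
      ring
    rw [hL, hmid, hgexp, hG2exp, hD, hR]
    field_simp
  rw [← Complex.ofReal_inj]
  rw [hsum, hreal]
end

section
/- For every positive integer n, the quantity (n(n²-1))/6 + (n²/√3)·(2/(1-(2-√3)^n) − 1) is a rational number. -/
lemma pq_exists (s : ℝ) (hs : s ^ 2 = 3) (n : ℕ) :
    ∃ p q : ℤ, 1 ≤ p ∧ 0 ≤ q ∧ (n = 0 ∨ 2 ≤ p) ∧
      (2 - s) ^ n = (p : ℝ) - (q : ℝ) * s ∧ p ^ 2 - 3 * q ^ 2 = 1 := by
  induction n with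
  | zero => exact ⟨1, 0, by norm_num⟩
  | succ k ih =>
    obtain ⟨p, q, hp, hq, _, heq, hpell⟩ := ih
    refine ⟨2 * p + 3 * q, p + 2 * q, by omega, by omega, Or.inr (by omega), ?_, by linear_combination hpell⟩
    rw [pow_succ, heq]
    push_cast
    linear_combination (q : ℝ) * hs

theorem stmt_6 (n : ℕ) (hn : 0 < n) :
    ∃ q : ℚ,
      (n * ((n : ℝ) ^ 2 - 1)) / 6 +
        ((n : ℝ) ^ 2 / Real.sqrt 3) * (2 / (1 - (2 - Real.sqrt 3) ^ n) - 1) = (q : ℝ) := by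
  set s := Real.sqrt 3 with hsdef
  have hs : s ^ 2 = 3 := Real.sq_sqrt (by norm_num)
  have hs1 : 1 < s := by nlinarith [Real.sqrt_nonneg 3, hs]
  have hs0 : (0:ℝ) < s := by linarith
  obtain ⟨p, q, hp, hq, hp2, heq, hpell⟩ := pq_exists s hs n
  have hp2' : 2 ≤ p := by
    rcases hp2 with h | h
    · omega
    · exact h
  have ha0 : (0:ℝ) < 2 - s := by nlinarith
  have ha1 : 2 - s < 1 := by linarith
  have han : (2 - s) ^ n < 1 := by
    calc (2 - s) ^ n ≤ (2 - s) ^ 1 := pow_le_pow_of_le_one ha0.le ha1.le hn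
    _ < 1 := by simpa using ha1
  have hne : 1 - (2 - s) ^ n ≠ 0 := by nlinarith
  have hpne : (p : ℝ) - 1 ≠ 0 := by
    have : (2:ℝ) ≤ (p:ℝ) := by exact_mod_cast hp2'
    linarith
  refine ⟨(n : ℚ) * ((n:ℚ)^2 - 1) / 6 + (n:ℚ)^2 * q / (p - 1), ?_⟩
  rw [heq] at hne ⊢
  have hpell' : (p:ℝ)^2 - 3 * (q:ℝ)^2 = 1 := by exact_mod_cast hpell
  push_cast
  have hne' : 1 - ((p:ℝ) - s * q) ≠ 0 := by intro h; apply hne; linarith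
  field_simp
  linear_combination (6*(n:ℝ)) * hpell' - 6*(n:ℝ)*(q:ℝ)^2 * hs
end
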